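/- In a hidden Markov tree model, for every nonempty subset V of the vertex set that induces a subtree (i.e. V is connected in the tree), the entropy of the corresponding state subprocess decomposes as H(S̄_V | X = x) = Σ_{v∈V} H(S_v | S_{ρ(v)}, X = x), where the term for a vertex v that is the root of the tree or whose parent ρ(v) does not belong to V is read as H(S_v | X = x). -/

import Mathlib

/-- A hidden Markov tree (HMT) model on a finite rooted tree with `n` vertices:
the root is `0` and the vertices are indexed in a topological order, i.e. every
non-root vertex has a parent with strictly smaller index.  The model has `J`
states and observation alphabet `{0, …, V-1}`, with initial probabilities (for
the root), transition probabilities and emission probabilities. -/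
structure HMTModel (J V n : ℕ) [NeZero n] where
  parent : Fin n → Fin n
  parent_lt : ∀ u : Fin n, u ≠ 0 → parent u < u
  init : Fin J → ℝ
  trans : Fin J → Fin J → ℝ
  emit : Fin J → Fin V → ℝ
  init_nonneg : ∀ j, 0 ≤ init j
  init_sum : ∑ j, init j = 1
  trans_nonneg : ∀ i j, 0 ≤ trans i j
  trans_sum : ∀ i, ∑ j, trans i j = 1
  emit_nonneg : ∀ j y, 0 ≤ emit j y
  emit_sum : ∀ j, ∑ y, emit j y = 1

namespace HMTModel

variable {J V n : ℕ} [NeZero J] [NeZero n]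

/-- The joint law of the state tree and the observed tree:
`P(S = s, X = x) = π_{s_0} (∏_{u ≠ 0} p_{s_{ρ(u)} s_u}) ∏_u b_{s_u}(x_u)`. -/
noncomputable def joint (M : HMTModel J V n) (s : Fin n → Fin J) (x : Fin n → Fin V) : ℝ :=
  M.init (s 0) *
    (∏ u ∈ Finset.univ.filter (fun u : Fin n => u ≠ 0), M.trans (s (M.parent u)) (s u)) *
    ∏ u : Fin n, M.emit (s u) (x u)

open Classical in
/-- Probability of an event on (state tree, observed tree). -/
noncomputable def pr (M : HMTModel J V n)
    (E : (Fin n → Fin J) → (Fin n → Fin V) → Prop) : ℝ :=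
  ∑ s : Fin n → Fin J, ∑ y : Fin n → Fin V, if E s y then M.joint s y else 0

/-- Conditional probability `P(A | B)`; it is `0` when the conditioning event
has probability zero. -/
noncomputable def cpr (M : HMTModel J V n)
    (A B : (Fin n → Fin J) → (Fin n → Fin V) → Prop) : ℝ :=
  if 0 < M.pr B then M.pr (fun s y => A s y ∧ B s y) / M.pr B else 0

/-- Entropy of the random vector `f(S)` given the event `E`
(natural logarithm, with the convention `0 log 0 = 0`). -/
noncomputable def condEnt (M : HMTModel J V n) {α : Type*} [Fintype α]
    (f : (Fin n → Fin J) → α)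
    (E : (Fin n → Fin J) → (Fin n → Fin V) → Prop) : ℝ :=
  -∑ a : α, M.cpr (fun s _ => f s = a) E * Real.log (M.cpr (fun s _ => f s = a) E)

/-- Entropy of `f(S)` given the random vector `g(S)` and the event `E`:
`H(f(S) | g(S), E) = ∑_c P(g(S) = c | E) H(f(S) | g(S) = c, E)`. -/
noncomputable def condEntGiven (M : HMTModel J V n) {α β : Type*} [Fintype α] [Fintype β]
    (f : (Fin n → Fin J) → α) (g : (Fin n → Fin J) → β)
    (E : (Fin n → Fin J) → (Fin n → Fin V) → Prop) : ℝ :=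
  ∑ c : β, M.cpr (fun s _ => g s = c) E * M.condEnt f (fun s y => g s = c ∧ E s y)

/-- The event `X = x`. -/
def obsEq (x : Fin n → Fin V) : (Fin n → Fin J) → (Fin n → Fin V) → Prop :=
  fun _ y => y = x

/-- `v` belongs to the complete subtree rooted at `u` (i.e. `u` is obtained
from `v` by repeatedly taking parents). -/
def inSubtree (M : HMTModel J V n) (u v : Fin n) : Prop :=
  Relation.ReflTransGen (fun a b : Fin n => a ≠ 0 ∧ M.parent a = b) v u

open Classical in
/-- The state subtree `S̄_u` rooted at `u` (coordinates outside the subtree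
are padded by `0`). -/
noncomputable def subVar (M : HMTModel J V n) (u : Fin n) (s : Fin n → Fin J) :
    Fin n → Fin J :=
  fun v => if M.inSubtree u v then s v else 0

open Classical in
/-- The collection `S̄_{c(u)}` of state subtrees rooted at the children of `u`
(all other coordinates padded by `0`). -/
noncomputable def childSubVar (M : HMTModel J V n) (u : Fin n) (s : Fin n → Fin J) :
    Fin n → Fin J :=
  fun v => if M.inSubtree u v ∧ v ≠ u then s v else 0

/-- The states `S_{c(u)}` of the children of `u` (all other coordinates padded
by `0`). -/
def childVar (M : HMTModel J V n) (u : Fin n) (s : Fin n → Fin J) :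
    Fin n → Fin J :=
  fun v => if v ≠ 0 ∧ M.parent v = u then s v else 0

/-- The states `(S_v)_{v ∈ Vs}` of a subset `Vs` of vertices (all other
coordinates padded by `0`). -/
def memVar (_M : HMTModel J V n) (Vs : Finset (Fin n)) (s : Fin n → Fin J) :
    Fin n → Fin J :=
  fun v => if v ∈ Vs then s v else 0

end HMTModel

open HMTModel
-- basic lemmas about pr/cpr
section Basic
open Classical Finset
set_option linter.unusedSectionVars false
variable {J V n : ℕ} [NeZero J] [NeZero n] (M : HMTModel J V n)

lemma joint_nonneg (s : Fin n → Fin J) (x : Fin n → Fin V) : 0 ≤ M.joint s x := by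
  unfold HMTModel.joint
  apply mul_nonneg (mul_nonneg (M.init_nonneg _) _)
  · exact Finset.prod_nonneg fun u _ => M.emit_nonneg _ _
  · exact Finset.prod_nonneg fun u _ => M.trans_nonneg _ _

lemma pr_nonneg (E : (Fin n → Fin J) → (Fin n → Fin V) → Prop) : 0 ≤ M.pr E := by
  unfold HMTModel.pr
  refine Finset.sum_nonneg fun s _ => Finset.sum_nonneg fun y _ => ?_
  split
  · exact joint_nonneg M s y
  · exact le_refl _

lemma pr_congr {E F : (Fin n → Fin J) → (Fin n → Fin V) → Prop}
    (h : ∀ s y, E s y ↔ F s y) : M.pr E = M.pr F := by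
  unfold HMTModel.pr
  refine Finset.sum_congr rfl fun s _ => Finset.sum_congr rfl fun y _ => ?_
  simp [h s y]

lemma pr_mono {E F : (Fin n → Fin J) → (Fin n → Fin V) → Prop}
    (h : ∀ s y, E s y → F s y) : M.pr E ≤ M.pr F := by
  unfold HMTModel.pr
  refine Finset.sum_le_sum fun s _ => Finset.sum_le_sum fun y _ => ?_
  by_cases hE : E s y
  · simp [hE, h s y hE]
  · simp only [hE, if_false]
    split
    · exact joint_nonneg M s y
    · exact le_refl _

lemma pr_false (B : (Fin n → Fin J) → (Fin n → Fin V) → Prop) :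
    M.pr (fun s y => False ∧ B s y) = 0 := by
  unfold HMTModel.pr; simp

end Basic
section Basic2
open Classical Finset
set_option linter.unusedSectionVars false
variable {J V n : ℕ} [NeZero J] [NeZero n] (M : HMTModel J V n)

/-- law of total probability over values of a function of the state -/
lemma pr_partition {α : Type*} [Fintype α] (f : (Fin n → Fin J) → α)
    (B : (Fin n → Fin J) → (Fin n → Fin V) → Prop) :
    ∑ a : α, M.pr (fun s y => f s = a ∧ B s y) = M.pr B := by
  unfold HMTModel.pr
  rw [Finset.sum_comm]
  refine Finset.sum_congr rfl fun s _ => ?_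
  rw [Finset.sum_comm]
  refine Finset.sum_congr rfl fun y _ => ?_
  by_cases hB : B s y
  · simp [hB]
  · simp [hB]

lemma pr_zero_of_le {E F : (Fin n → Fin J) → (Fin n → Fin V) → Prop}
    (h : ∀ s y, E s y → F s y) (hF : M.pr F = 0) : M.pr E = 0 :=
  le_antisymm (hF ▸ pr_mono M h) (pr_nonneg M E)

lemma cpr_nonneg (A B : (Fin n → Fin J) → (Fin n → Fin V) → Prop) : 0 ≤ M.cpr A B := by
  unfold HMTModel.cpr
  split
  · exact div_nonneg (pr_nonneg M _) (le_of_lt (by assumption))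
  · exact le_refl _

lemma cpr_eq (A B : (Fin n → Fin J) → (Fin n → Fin V) → Prop) (hB : 0 < M.pr B) :
    M.cpr A B = M.pr (fun s y => A s y ∧ B s y) / M.pr B := by
  unfold HMTModel.cpr; rw [if_pos hB]

lemma cpr_congr {A A' B B' : (Fin n → Fin J) → (Fin n → Fin V) → Prop}
    (hA : ∀ s y, A s y ∧ B s y ↔ A' s y ∧ B' s y) (hB : ∀ s y, B s y ↔ B' s y) :
    M.cpr A B = M.cpr A' B' := by
  unfold HMTModel.cpr
  rw [pr_congr M hB, pr_congr M hA]

/-- entropy is invariant under injective recoding of the variable -/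
lemma condEnt_comp {α β : Type*} [Fintype α] [Fintype β]
    (f : (Fin n → Fin J) → α) (e : α → β) (he : Function.Injective e)
    (E : (Fin n → Fin J) → (Fin n → Fin V) → Prop) :
    M.condEnt (fun s => e (f s)) E = M.condEnt f E := by
  unfold HMTModel.condEnt
  congr 1
  set T : β → ℝ := fun b => M.cpr (fun s _ => e (f s) = b) E *
      Real.log (M.cpr (fun s _ => e (f s) = b) E) with hT
  have h1 : ∑ b : β, T b = ∑ b ∈ Finset.univ.image e, T b := by
    refine (Finset.sum_subset (Finset.subset_univ _) ?_).symm
    intro b _ hb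
    simp only [Finset.mem_image, Finset.mem_univ, true_and, not_exists] at hb
    have h0 : M.cpr (fun s _ => e (f s) = b) E = 0 := by
      unfold HMTModel.cpr
      split
      · rw [pr_zero_of_le M (F := fun _ _ => False) (fun s y h => hb (f s) h.1)
          (by unfold HMTModel.pr; simp), zero_div]
      · rfl
    simp [hT, h0]
  have h2 : ∑ b ∈ Finset.univ.image e, T b = ∑ a : α, T (e a) :=
    Finset.sum_image (fun a _ b _ h => he h)
  rw [h1, h2]
  refine Finset.sum_congr rfl fun a _ => ?_
  have : M.cpr (fun s _ => e (f s) = e a) E = M.cpr (fun s _ => f s = a) E := by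
    refine cpr_congr M (fun s y => ?_) (fun s y => Iff.rfl)
    simp [he.eq_iff]
  simp only [hT, this]
end Basic2
section ChainRule
open Classical Finset
set_option linter.unusedSectionVars false
variable {J V n : ℕ} [NeZero J] [NeZero n] (M : HMTModel J V n)

private lemma xy_log_xy {x y : ℝ} (hx : 0 ≤ x) (hy : 0 ≤ y) :
    x * y * Real.log (x * y) = x * y * Real.log x + x * y * Real.log y := by
  rcases eq_or_lt_of_le hx with h | h
  · simp [← h]
  rcases eq_or_lt_of_le hy with h' | h'
  · simp [← h']
  rw [Real.log_mul (ne_of_gt h) (ne_of_gt h'), mul_add]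

/-- chain rule for entropy -/
lemma condEnt_pair {α β : Type*} [Fintype α] [Fintype β]
    (f : (Fin n → Fin J) → α) (g : (Fin n → Fin J) → β)
    (E : (Fin n → Fin J) → (Fin n → Fin V) → Prop) (hE : 0 < M.pr E) :
    M.condEnt (fun s => (f s, g s)) E = M.condEnt g E + M.condEntGiven f g E := by
  classical
  set P : β → ℝ := fun b => M.cpr (fun s _ => g s = b) E with hP
  set Q : α → β → ℝ := fun a b => M.cpr (fun s _ => f s = a) (fun s y => g s = b ∧ E s y)
    with hQ
  have hPnn : ∀ b, 0 ≤ P b := fun b => cpr_nonneg M _ _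
  have hQnn : ∀ a b, 0 ≤ Q a b := fun a b => cpr_nonneg M _ _
  have key : ∀ a b, M.cpr (fun s _ => (f s, g s) = (a, b)) E = P b * Q a b := by
    intro a b
    by_cases hb : 0 < M.pr (fun s y => g s = b ∧ E s y)
    · rw [cpr_eq M _ _ hE, hP, hQ]
      simp only
      rw [cpr_eq M _ _ hE, cpr_eq M _ _ hb]
      rw [pr_congr M (F := fun s y => f s = a ∧ (g s = b ∧ E s y))
        (fun s y => by simp [Prod.ext_iff, and_assoc])]
      field_simp
    · have hb0 : M.pr (fun s y => g s = b ∧ E s y) = 0 :=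
        le_antisymm (not_lt.mp hb) (pr_nonneg M _)
      have h1 : M.pr (fun s y => (f s, g s) = (a, b) ∧ E s y) = 0 :=
        pr_zero_of_le M (fun s y h => ⟨(Prod.ext_iff.mp h.1).2, h.2⟩) hb0
      have h2 : P b = 0 := by
        rw [hP]; simp only; rw [cpr_eq M _ _ hE, hb0, zero_div]
      rw [cpr_eq M _ _ hE, h1, zero_div, h2, zero_mul]
  unfold HMTModel.condEnt HMTModel.condEntGiven
  rw [Fintype.sum_prod_type]
  have step : ∀ a b, M.cpr (fun s _ => (f s, g s) = (a, b)) E *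
      Real.log (M.cpr (fun s _ => (f s, g s) = (a, b)) E)
      = P b * Q a b * Real.log (P b) + P b * Q a b * Real.log (Q a b) := by
    intro a b; rw [key a b]; exact xy_log_xy (hPnn b) (hQnn a b)
  rw [Finset.sum_congr rfl (fun a _ => Finset.sum_congr rfl fun b _ => step a b)]
  rw [Finset.sum_comm]
  simp only [Finset.sum_add_distrib]
  have hQsum : ∀ b, 0 < M.pr (fun s y => g s = b ∧ E s y) → ∑ a, Q a b = 1 := by
    intro b hb
    rw [hQ]
    simp only
    have := pr_partition M f (fun s y => g s = b ∧ E s y)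
    rw [Finset.sum_congr rfl (fun a _ => cpr_eq M _ _ hb), ← Finset.sum_div, this,
      div_self (ne_of_gt hb)]
  have first : ∀ b, ∑ a, P b * Q a b * Real.log (P b) = P b * Real.log (P b) := by
    intro b
    by_cases hb : 0 < M.pr (fun s y => g s = b ∧ E s y)
    · rw [← Finset.sum_mul, ← Finset.mul_sum, hQsum b hb, mul_one]
    · have : P b = 0 := by
        rw [hP]; simp only
        rw [cpr_eq M _ _ hE, le_antisymm (not_lt.mp hb) (pr_nonneg M _), zero_div]
      simp [this]
  have second : ∀ b, ∑ a, P b * Q a b * Real.log (Q a b)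
      = -(P b * M.condEnt f (fun s y => g s = b ∧ E s y)) := by
    intro b
    unfold HMTModel.condEnt
    rw [mul_neg, neg_neg, Finset.mul_sum]
    refine Finset.sum_congr rfl fun a _ => by rw [hQ]; ring
  rw [Finset.sum_congr rfl (fun b _ => first b),
    Finset.sum_congr rfl (fun b _ => second b)]
  rw [Finset.sum_neg_distrib]
  ring
end ChainRule
section Subtree
open Classical Finset
set_option linter.unusedSectionVars false
variable {J V n : ℕ} [NeZero J] [NeZero n] (M : HMTModel J V n)

lemma le_of_inSubtree {m v : Fin n} (h : M.inSubtree m v) : m ≤ v := by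
  unfold HMTModel.inSubtree at h
  induction h with
  | refl => exact le_refl _
  | tail _ hbc ih => exact le_of_lt (lt_of_lt_of_le (hbc.2 ▸ M.parent_lt _ hbc.1) ih)

lemma inSubtree_self (m : Fin n) : M.inSubtree m m := Relation.ReflTransGen.refl

lemma inSubtree_of_parent {m v : Fin n} (hv : v ≠ 0) (h : M.inSubtree m (M.parent v)) :
    M.inSubtree m v := Relation.ReflTransGen.head ⟨hv, rfl⟩ h

lemma inSubtree_parent {m v : Fin n} (h : M.inSubtree m v) (hne : v ≠ m) :
    v ≠ 0 ∧ M.inSubtree m (M.parent v) := by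
  rcases Relation.ReflTransGen.cases_head h with h' | ⟨c, hc, hc'⟩
  · exact absurd h' hne
  · exact ⟨hc.1, hc.2 ▸ hc'⟩

lemma not_inSubtree_zero {m : Fin n} (hm : m ≠ 0) : ¬ M.inSubtree m 0 := by
  intro h
  have h2 := le_of_inSubtree M h
  rw [Fin.le_def] at h2
  apply hm
  rw [Fin.ext_iff]
  simpa using h2

lemma not_inSubtree_parent_self {m : Fin n} (hm : m ≠ 0) : ¬ M.inSubtree m (M.parent m) := by
  intro h
  exact absurd (le_of_inSubtree M h) (not_le.mpr (M.parent_lt m hm))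

end Subtree

section Factor
open Classical Finset
set_option linter.unusedSectionVars false
variable {J V n : ℕ} [NeZero J] [NeZero n] (M : HMTModel J V n) (x : Fin n → Fin V) (m : Fin n)

open Classical in
/-- product of factors attached to vertices outside the subtree of `m` -/
noncomputable def Aout (s : Fin n → Fin J) : ℝ :=
  M.init (s 0) *
    (∏ u ∈ Finset.univ.filter (fun u : Fin n => u ≠ 0 ∧ ¬ M.inSubtree m u),
      M.trans (s (M.parent u)) (s u)) *
    ∏ u ∈ Finset.univ.filter (fun u : Fin n => ¬ M.inSubtree m u), M.emit (s u) (x u)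

open Classical in
/-- product of factors attached to vertices in the subtree of `m` -/
noncomputable def Bin (s : Fin n → Fin J) : ℝ :=
  (∏ u ∈ Finset.univ.filter (fun u : Fin n => M.inSubtree m u),
      M.trans (s (M.parent u)) (s u)) *
    ∏ u ∈ Finset.univ.filter (fun u : Fin n => M.inSubtree m u), M.emit (s u) (x u)

lemma joint_split (hm : m ≠ 0) (s : Fin n → Fin J) :
    M.joint s x = Aout M x m s * Bin M x m s := by
  unfold HMTModel.joint Aout Bin
  rw [← Finset.prod_filter_mul_prod_filter_not Finset.univ (fun u => M.inSubtree m u)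
    (fun u => M.emit (s u) (x u))]
  rw [← Finset.prod_filter_mul_prod_filter_not (Finset.univ.filter (fun u : Fin n => u ≠ 0))
    (fun u => M.inSubtree m u) (fun u => M.trans (s (M.parent u)) (s u))]
  rw [Finset.filter_filter, Finset.filter_filter]
  have e1 : (Finset.univ.filter (fun u : Fin n => u ≠ 0 ∧ M.inSubtree m u))
      = Finset.univ.filter (fun u : Fin n => M.inSubtree m u) := by
    refine Finset.filter_congr fun u _ => ?_
    exact ⟨fun h => h.2, fun h => ⟨fun h0 => not_inSubtree_zero M hm (h0 ▸ h), h⟩⟩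
  rw [e1]
  ring

lemma Aout_congr {s s' : Fin n → Fin J} (h : ∀ v, ¬ M.inSubtree m v → s v = s' v)
    (hm : m ≠ 0) : Aout M x m s = Aout M x m s' := by
  unfold Aout
  rw [h 0 (not_inSubtree_zero M hm)]
  congr 1
  · congr 1
    refine Finset.prod_congr rfl fun u hu => ?_
    simp only [Finset.mem_filter, Finset.mem_univ, true_and] at hu
    rw [h u hu.2, h (M.parent u) (fun hp => hu.2 (inSubtree_of_parent M hu.1 hp))]
  · refine Finset.prod_congr rfl fun u hu => ?_
    simp only [Finset.mem_filter, Finset.mem_univ, true_and] at hu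
    rw [h u hu]

lemma Bin_congr {s s' : Fin n → Fin J} (h : ∀ v, M.inSubtree m v → s v = s' v)
    (hρ : s (M.parent m) = s' (M.parent m)) : Bin M x m s = Bin M x m s' := by
  unfold Bin
  congr 1
  · refine Finset.prod_congr rfl fun u hu => ?_
    simp only [Finset.mem_filter, Finset.mem_univ, true_and] at hu
    by_cases hum : u = m
    · subst hum; rw [h u hu, hρ]
    · rw [h u hu, h (M.parent u) (inSubtree_parent M hu hum).2]
  · refine Finset.prod_congr rfl fun u hu => ?_
    simp only [Finset.mem_filter, Finset.mem_univ, true_and] at hu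
    rw [h u hu]

end Factor
section Swap
open Classical Finset
set_option linter.unusedSectionVars false
variable {J V n : ℕ} [NeZero J] [NeZero n] (M : HMTModel J V n) (x : Fin n → Fin V) (m : Fin n)

open Classical in
/-- probability (of a state event) together with the observation `x` -/
noncomputable def Sig (R : (Fin n → Fin J) → Prop) : ℝ :=
  ∑ s : Fin n → Fin J, if R s then M.joint s x else 0

lemma pr_obs (R : (Fin n → Fin J) → Prop) :
    M.pr (fun s y => R s ∧ y = x) = Sig M x R := by
  unfold HMTModel.pr Sig
  refine Finset.sum_congr rfl fun s _ => ?_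
  by_cases hR : R s
  · simp [hR]
  · simp [hR]

open Classical in
/-- glue a function on the subtree of `m` and a function on its complement -/
noncomputable def glue (w : {v : Fin n // M.inSubtree m v} → Fin J)
    (u : {v : Fin n // ¬ M.inSubtree m v} → Fin J) : Fin n → Fin J :=
  fun v => if h : M.inSubtree m v then w ⟨v, h⟩ else u ⟨v, h⟩

lemma Sig_split (hm : m ≠ 0) (k : Fin J)
    (Qin Qout : (Fin n → Fin J) → Prop)
    (hin : ∀ s s', (∀ v, M.inSubtree m v → s v = s' v) → (Qin s ↔ Qin s'))
    (hout : ∀ s s', (∀ v, ¬ M.inSubtree m v → s v = s' v) → (Qout s ↔ Qout s'))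
    (hk : ∀ s, Qout s → s (M.parent m) = k) :
    Sig M x (fun s => Qin s ∧ Qout s)
      = (∑ w : {v : Fin n // M.inSubtree m v} → Fin J,
          if Qin (glue M m w (fun _ => k)) then Bin M x m (glue M m w (fun _ => k)) else 0)
        * ∑ u : {v : Fin n // ¬ M.inSubtree m v} → Fin J,
          if Qout (glue M m (fun _ => 0) u) then Aout M x m (glue M m (fun _ => 0) u) else 0
    := by
  unfold Sig
  rw [Finset.sum_mul_sum]
  refine Eq.trans (Fintype.sum_equiv (Equiv.piEquivPiSubtypeProd
      (fun v : Fin n => M.inSubtree m v) (fun _ => Fin J)) _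
      (fun q => (if Qin (glue M m q.1 (fun _ => k))
          then Bin M x m (glue M m q.1 (fun _ => k)) else 0)
        * (if Qout (glue M m (fun _ => 0) q.2)
          then Aout M x m (glue M m (fun _ => 0) q.2) else 0))
      fun s => ?_) (Fintype.sum_prod_type _)
  simp only [Equiv.piEquivPiSubtypeProd_apply]
  set gin := glue M m (fun i : {v : Fin n // M.inSubtree m v} => s i.val) (fun _ => k)
    with hgin
  set gout := glue M m (fun _ => 0) (fun i : {v : Fin n // ¬ M.inSubtree m v} => s i.val)
    with hgout
  have hQin : Qin s ↔ Qin gin := by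
    refine hin _ _ fun v hv => ?_
    simp [hgin, glue, hv]
  have hQout : Qout s ↔ Qout gout := by
    refine hout _ _ fun v hv => ?_
    simp [hgout, glue, hv]
  by_cases h1 : Qin s
  · by_cases h2 : Qout s
    · rw [if_pos ⟨h1, h2⟩, if_pos (hQin.mp h1), if_pos (hQout.mp h2)]
      rw [joint_split M x m hm]
      rw [mul_comm]
      congr 1
      · refine Bin_congr M x m (fun v hv => by simp [hgin, glue, hv]) ?_
        have hpm : ¬ M.inSubtree m (M.parent m) := not_inSubtree_parent_self M hm
        have h3 : s (M.parent m) = k := hk _ h2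
        have h4 : gin (M.parent m) = k := by simp [hgin, glue, hpm]
        rw [h3, h4]
      · exact Aout_congr M x m (fun v hv => by simp [hgout, glue, hv]) hm
    · rw [if_neg (fun h => h2 h.2), if_neg (fun h => h2 (hQout.mpr h)), mul_zero]
  · rw [if_neg (fun h => h1 h.1), if_neg (fun h => h1 (hQin.mpr h)), zero_mul]

lemma Sig_swap (hm : m ≠ 0) (k : Fin J)
    (Qin Qin' Qout Qout' : (Fin n → Fin J) → Prop)
    (hin : ∀ s s', (∀ v, M.inSubtree m v → s v = s' v) → (Qin s ↔ Qin s'))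
    (hin' : ∀ s s', (∀ v, M.inSubtree m v → s v = s' v) → (Qin' s ↔ Qin' s'))
    (hout : ∀ s s', (∀ v, ¬ M.inSubtree m v → s v = s' v) → (Qout s ↔ Qout s'))
    (hout' : ∀ s s', (∀ v, ¬ M.inSubtree m v → s v = s' v) → (Qout' s ↔ Qout' s'))
    (hk : ∀ s, Qout s → s (M.parent m) = k)
    (hk' : ∀ s, Qout' s → s (M.parent m) = k) :
    Sig M x (fun s => Qin s ∧ Qout s) * Sig M x (fun s => Qin' s ∧ Qout' s)
      = Sig M x (fun s => Qin s ∧ Qout' s) * Sig M x (fun s => Qin' s ∧ Qout s) := by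
  rw [Sig_split M x m hm k Qin Qout hin hout hk,
    Sig_split M x m hm k Qin' Qout' hin' hout' hk',
    Sig_split M x m hm k Qin Qout' hin hout' hk',
    Sig_split M x m hm k Qin' Qout hin' hout hk]
  ring

end Swap
section Markov
open Classical Finset
set_option linter.unusedSectionVars false
set_option maxHeartbeats 1000000
variable {J V n : ℕ} [NeZero J] [NeZero n] (M : HMTModel J V n) (x : Fin n → Fin V) (m : Fin n)

lemma pr_and_obs (R : (Fin n → Fin J) → Prop) :
    M.pr (fun s y => R s ∧ obsEq x s y) = Sig M x R := pr_obs M x R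

lemma markov_step (hm : m ≠ 0) (Vs' : Finset (Fin n))
    (hVT : ∀ v ∈ Vs', ¬ M.inSubtree m v) (hρm : M.parent m ∈ Vs')
    (hx : 0 < M.pr (obsEq x)) :
    M.condEntGiven (fun s => s m) (M.memVar Vs') (obsEq x)
      = M.condEntGiven (fun s => s m) (fun s => s (M.parent m)) (obsEq x) := by
  have hmem_ρ : ∀ s : Fin n → Fin J, M.memVar Vs' s (M.parent m) = s (M.parent m) := by
    intro s; unfold HMTModel.memVar; rw [if_pos hρm]
  -- the four Sig-form probabilities
  have prBc : ∀ c : Fin n → Fin J,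
      M.pr (fun s y => M.memVar Vs' s = c ∧ obsEq x s y)
        = Sig M x (fun s => M.memVar Vs' s = c) := fun c => pr_and_obs M x _
  have prBk : ∀ k : Fin J,
      M.pr (fun s y => s (M.parent m) = k ∧ obsEq x s y)
        = Sig M x (fun s => s (M.parent m) = k) := fun k => pr_and_obs M x _
  -- dependence hypotheses for the swap lemma
  have hin : ∀ (j : Fin J) (s s' : Fin n → Fin J),
      (∀ v, M.inSubtree m v → s v = s' v) → ((s m = j) ↔ (s' m = j)) := by
    intro j s s' h
    rw [h m (inSubtree_self M m)]
  have hin' : ∀ (s s' : Fin n → Fin J),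
      (∀ v, M.inSubtree m v → s v = s' v) → (True ↔ True) := fun _ _ _ => Iff.rfl
  have hout : ∀ (c : Fin n → Fin J) (s s' : Fin n → Fin J),
      (∀ v, ¬ M.inSubtree m v → s v = s' v) →
        ((M.memVar Vs' s = c) ↔ (M.memVar Vs' s' = c)) := by
    intro c s s' h
    have : M.memVar Vs' s = M.memVar Vs' s' := by
      funext v
      unfold HMTModel.memVar
      by_cases hv : v ∈ Vs'
      · rw [if_pos hv, if_pos hv, h v (hVT v hv)]
      · rw [if_neg hv, if_neg hv]
    rw [this]
  have hout' : ∀ (k : Fin J) (s s' : Fin n → Fin J),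
      (∀ v, ¬ M.inSubtree m v → s v = s' v) →
        ((s (M.parent m) = k) ↔ (s' (M.parent m) = k)) := by
    intro k s s' h
    rw [h _ (not_inSubtree_parent_self M hm)]
  have hkc : ∀ (c : Fin n → Fin J) (s : Fin n → Fin J),
      M.memVar Vs' s = c → s (M.parent m) = c (M.parent m) := by
    intro c s hs
    rw [← hmem_ρ s, hs]
  -- step A: conditional independence
  have stepA : ∀ c : Fin n → Fin J,
      0 < M.pr (fun s y => M.memVar Vs' s = c ∧ obsEq x s y) →
      ∀ j : Fin J,
        M.cpr (fun s _ => s m = j) (fun s y => M.memVar Vs' s = c ∧ obsEq x s y)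
          = M.cpr (fun s _ => s m = j)
              (fun s y => s (M.parent m) = c (M.parent m) ∧ obsEq x s y) := by
    intro c hc j
    set k := c (M.parent m) with hk
    have hck : ∀ s : Fin n → Fin J, M.memVar Vs' s = c → s (M.parent m) = k :=
      fun s hs => hkc c s hs
    have hmono : M.pr (fun s y => M.memVar Vs' s = c ∧ obsEq x s y)
        ≤ M.pr (fun s y => s (M.parent m) = k ∧ obsEq x s y) :=
      pr_mono M (fun s y h => ⟨hck s h.1, h.2⟩)
    have hkpos : 0 < M.pr (fun s y => s (M.parent m) = k ∧ obsEq x s y) :=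
      lt_of_lt_of_le hc hmono
    rw [cpr_eq M _ _ hc, cpr_eq M _ _ hkpos]
    rw [div_eq_div_iff (ne_of_gt hc) (ne_of_gt hkpos)]
    have e1 : M.pr (fun s y => (s m = j) ∧ (M.memVar Vs' s = c ∧ obsEq x s y))
        = Sig M x (fun s => (s m = j) ∧ M.memVar Vs' s = c) := by
      rw [pr_congr M (F := fun s y => ((s m = j) ∧ M.memVar Vs' s = c) ∧ obsEq x s y)
        (fun s y => by tauto)]
      exact pr_and_obs M x _
    have e2 : M.pr (fun s y => (s m = j) ∧ (s (M.parent m) = k ∧ obsEq x s y))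
        = Sig M x (fun s => (s m = j) ∧ s (M.parent m) = k) := by
      rw [pr_congr M (F := fun s y => ((s m = j) ∧ s (M.parent m) = k) ∧ obsEq x s y)
        (fun s y => by tauto)]
      exact pr_and_obs M x _
    have e3 : M.pr (fun s y => s (M.parent m) = k ∧ obsEq x s y)
        = Sig M x (fun s => True ∧ s (M.parent m) = k) := by
      rw [pr_congr M (F := fun s y => (True ∧ s (M.parent m) = k) ∧ obsEq x s y)
        (fun s y => by tauto)]
      exact pr_and_obs M x _
    have e4 : M.pr (fun s y => M.memVar Vs' s = c ∧ obsEq x s y)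
        = Sig M x (fun s => True ∧ M.memVar Vs' s = c) := by
      rw [pr_congr M (F := fun s y => (True ∧ M.memVar Vs' s = c) ∧ obsEq x s y)
        (fun s y => by tauto)]
      exact pr_and_obs M x _
    rw [e1, e2, e3, e4]
    exact Sig_swap M x m hm k _ _ _ _ (hin j) hin' (hout c) (hout' k) (hck) (fun s h => h)
  -- step B and C: regrouping
  unfold HMTModel.condEntGiven
  have termB : ∀ c : Fin n → Fin J,
      M.cpr (fun s _ => M.memVar Vs' s = c) (obsEq x) *
        M.condEnt (fun s => s m) (fun s y => M.memVar Vs' s = c ∧ obsEq x s y)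
      = M.cpr (fun s _ => M.memVar Vs' s = c) (obsEq x) *
        M.condEnt (fun s => s m)
          (fun s y => s (M.parent m) = c (M.parent m) ∧ obsEq x s y) := by
    intro c
    by_cases hc : 0 < M.pr (fun s y => M.memVar Vs' s = c ∧ obsEq x s y)
    · congr 1
      unfold HMTModel.condEnt
      congr 1
      refine Finset.sum_congr rfl fun j _ => ?_
      rw [stepA c hc j]
    · have h0 : M.pr (fun s y => M.memVar Vs' s = c ∧ obsEq x s y) = 0 :=
        le_antisymm (not_lt.mp hc) (pr_nonneg M _)
      have : M.cpr (fun s _ => M.memVar Vs' s = c) (obsEq x) = 0 := by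
        rw [cpr_eq M _ _ hx, h0, zero_div]
      rw [this, zero_mul, zero_mul]
  rw [Finset.sum_congr rfl (fun c _ => termB c)]
  -- now regroup by the value of c at the parent
  rw [← Finset.sum_fiberwise Finset.univ (fun c : Fin n → Fin J => c (M.parent m))
    (fun c => M.cpr (fun s _ => M.memVar Vs' s = c) (obsEq x) *
      M.condEnt (fun s => s m)
        (fun s y => s (M.parent m) = c (M.parent m) ∧ obsEq x s y))]
  refine Finset.sum_congr rfl fun k _ => ?_
  have inner : ∀ c ∈ Finset.univ.filter (fun c : Fin n → Fin J => c (M.parent m) = k),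
      M.cpr (fun s _ => M.memVar Vs' s = c) (obsEq x) *
        M.condEnt (fun s => s m)
          (fun s y => s (M.parent m) = c (M.parent m) ∧ obsEq x s y)
      = M.cpr (fun s _ => M.memVar Vs' s = c) (obsEq x) *
        M.condEnt (fun s => s m) (fun s y => s (M.parent m) = k ∧ obsEq x s y) := by
    intro c hcf
    simp only [Finset.mem_filter, Finset.mem_univ, true_and] at hcf
    rw [hcf]
  rw [Finset.sum_congr rfl inner, ← Finset.sum_mul]
  congr 1
  -- total probability: ∑_{c : c ρm = k} P(memVar = c | E) = P(s ρm = k | E)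
  rw [Finset.sum_congr rfl (fun c _ => cpr_eq M _ (obsEq x) hx), ← Finset.sum_div,
    cpr_eq M _ _ hx]
  congr 1
  have lhs_eq : ∑ c ∈ Finset.univ.filter (fun c : Fin n → Fin J => c (M.parent m) = k),
      M.pr (fun s y => M.memVar Vs' s = c ∧ obsEq x s y)
      = ∑ c ∈ Finset.univ.filter (fun c : Fin n → Fin J => c (M.parent m) = k),
        Sig M x (fun s => M.memVar Vs' s = c) :=
    Finset.sum_congr rfl fun c _ => prBc c
  rw [lhs_eq, prBk k]
  unfold Sig
  rw [Finset.sum_comm]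
  refine Finset.sum_congr rfl fun s _ => ?_
  by_cases hsk : s (M.parent m) = k
  · rw [if_pos hsk]
    rw [Finset.sum_eq_single (M.memVar Vs' s)]
    · rw [if_pos rfl]
    · intro b _ hb
      exact if_neg (fun h => hb h.symm)
    · intro hnot
      exfalso
      apply hnot
      rw [Finset.mem_filter]
      exact ⟨Finset.mem_univ _, (hmem_ρ s).trans hsk⟩
  · rw [if_neg hsk, Finset.sum_eq_zero]
    intro b hb
    refine if_neg fun h => hsk ?_
    have hbk := (Finset.mem_filter.mp hb).2
    rw [← hbk, ← h, hmem_ρ s]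
end Markov
section TreeComb
open Classical Finset
set_option linter.unusedSectionVars false
variable {J V n : ℕ} [NeZero J] [NeZero n] (M : HMTModel J V n)

lemma inSubtree_antisymm {a c : Fin n} (h1 : M.inSubtree c a) (h2 : M.inSubtree a c) :
    a = c := le_antisymm (le_of_inSubtree M h2) (le_of_inSubtree M h1)

lemma inSubtree_step {v : Fin n} (hv : v ≠ 0) : M.inSubtree (M.parent v) v :=
  Relation.ReflTransGen.single ⟨hv, rfl⟩

/-- comparability of ancestors -/
lemma inSubtree_comparable {u1 u2 b : Fin n} (h1 : M.inSubtree u1 b) (h2 : M.inSubtree u2 b) :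
    M.inSubtree u1 u2 ∨ M.inSubtree u2 u1 := by
  unfold HMTModel.inSubtree at h1
  revert h2
  induction h1 using Relation.ReflTransGen.head_induction_on with
  | refl => exact fun h2 => Or.inr h2
  | @head a c hstep htail ih =>
    intro h2
    by_cases hbu : a = u2
    · subst hbu
      exact Or.inl (Relation.ReflTransGen.head hstep htail)
    · exact ih (hstep.2 ▸ (inSubtree_parent M h2 hbu).2)

/-- key structural lemma: along a connected chain in `Vs`, there is a common
ancestor `c` such that the two upward paths stay inside `Vs`. -/
lemma chain_common_ancestor (Vs : Finset (Fin n)) {a b : Fin n} (hb : b ∈ Vs)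
    (h : Relation.ReflTransGen
      (fun u v : Fin n => u ∈ Vs ∧ v ∈ Vs ∧
        ((u ≠ 0 ∧ M.parent u = v) ∨ (v ≠ 0 ∧ M.parent v = u))) a b) :
    ∃ c, M.inSubtree c a ∧ M.inSubtree c b ∧
      (∀ w, M.inSubtree w a → M.inSubtree c w → w ∈ Vs) ∧
      (∀ w, M.inSubtree w b → M.inSubtree c w → w ∈ Vs) := by
  induction h using Relation.ReflTransGen.head_induction_on with
  | refl =>
    refine ⟨b, inSubtree_self M b, inSubtree_self M b, ?_, ?_⟩ <;>
    · intro w hw1 hw2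
      rw [inSubtree_antisymm M hw2 hw1]
      exact hb
  | @head a a' hstep htail ih =>
    obtain ⟨c, h1, h2, h3, h4⟩ := ih
    obtain ⟨haVs, ha'Vs, hedge⟩ := hstep
    rcases hedge with ⟨ha0, hρ⟩ | ⟨ha'0, hρ'⟩
    · -- a' = parent a
      refine ⟨c, Relation.ReflTransGen.head ⟨ha0, hρ⟩ h1, h2, ?_, h4⟩
      intro w hw1 hw2
      by_cases hwa : w = a
      · exact hwa ▸ haVs
      · have hw1' := inSubtree_parent M hw1 (fun h => hwa h.symm)
        exact h3 w (hρ ▸ hw1'.2) hw2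
    · -- a = parent a'
      by_cases hca' : c = a'
      · subst hca'
        refine ⟨a, inSubtree_self M a,
          Relation.ReflTransGen.tail h2 ⟨ha'0, hρ'⟩, ?_, ?_⟩
        · intro w hw1 hw2
          rw [inSubtree_antisymm M hw2 hw1]
          exact haVs
        · intro w hw1 hw2
          rcases inSubtree_comparable M hw1 h2 with hwc | hcw
          · by_cases hwa' : w = c
            · exact hwa' ▸ ha'Vs
            · have hstep2 := inSubtree_parent M hwc (fun h => hwa' h.symm)
              have hwa : M.inSubtree w a := hρ' ▸ hstep2.2
              exact (inSubtree_antisymm M hwa hw2) ▸ haVs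
          · exact h4 w hw1 hcw
      · have h1' := inSubtree_parent M h1 (fun h => hca' h.symm)
        have h1a : M.inSubtree c a := hρ' ▸ h1'.2
        refine ⟨c, h1a, h2, ?_, h4⟩
        intro w hw1 hw2
        exact h3 w (Relation.ReflTransGen.head ⟨ha'0, hρ'⟩ hw1) hw2

/-- connectivity implies the parent-closedness used in the induction -/
lemma conn_parent_closed (Vs : Finset (Fin n)) (hne : Vs.Nonempty)
    (hconn : ∀ a ∈ Vs, ∀ b ∈ Vs, Relation.ReflTransGen
        (fun u v : Fin n => u ∈ Vs ∧ v ∈ Vs ∧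
          ((u ≠ 0 ∧ M.parent u = v) ∨ (v ≠ 0 ∧ M.parent v = u))) a b) :
    ∀ v ∈ Vs, v ≠ Vs.min' hne → v ≠ 0 ∧ M.parent v ∈ Vs := by
  intro v hv hvr
  set r := Vs.min' hne with hr
  obtain ⟨c, h1, h2, h3, h4⟩ :=
    chain_common_ancestor M Vs (Vs.min'_mem hne) (hconn v hv r (Vs.min'_mem hne))
  have hcVs : c ∈ Vs := h4 c h2 (inSubtree_self M c)
  have hcr : c = r := le_antisymm (le_of_inSubtree M h2) (Vs.min'_le c hcVs)
  have hstep := inSubtree_parent M h1 (fun h => hvr (h.trans hcr))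
  refine ⟨hstep.1, ?_⟩
  exact h3 (M.parent v) (inSubtree_step M hstep.1) hstep.2
end TreeComb

section Main
open Classical Finset
set_option linter.unusedSectionVars false
variable {J V n : ℕ} [NeZero J] [NeZero n] (M : HMTModel J V n) (x : Fin n → Fin V)

lemma main_decomp (hx : 0 < M.pr (obsEq x)) :
    ∀ N : ℕ, ∀ Vs : Finset (Fin n), Vs.card = N → ∀ (hne : Vs.Nonempty),
    (∀ v ∈ Vs, v ≠ Vs.min' hne → v ≠ 0 ∧ M.parent v ∈ Vs) →
    M.condEnt (M.memVar Vs) (obsEq x)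
      = ∑ v ∈ Vs,
          if v = 0 ∨ M.parent v ∉ Vs
          then M.condEnt (fun s => s v) (obsEq x)
          else M.condEntGiven (fun s => s v) (fun s => s (M.parent v)) (obsEq x) := by
  intro N
  induction N with
  | zero => intro Vs hcard hne _; exact absurd (Finset.card_eq_zero.mp hcard) hne.ne_empty
  | succ N ih =>
    intro Vs hcard hne hcl
    by_cases hN : N = 0
    · -- singleton case
      subst hN
      obtain ⟨a, rfl⟩ := Finset.card_eq_one.mp hcard
      have hmem : M.memVar {a} = fun s => (fun j : Fin J =>
          (fun v => if v ∈ ({a} : Finset (Fin n)) then j else 0)) (s a) := by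
        funext s v
        show (if v ∈ ({a} : Finset (Fin n)) then s v else 0)
          = if v ∈ ({a} : Finset (Fin n)) then s a else 0
        by_cases hv : v ∈ ({a} : Finset (Fin n))
        · rw [if_pos hv, if_pos hv, Finset.mem_singleton.mp hv]
        · rw [if_neg hv, if_neg hv]
      have hinj : Function.Injective
          (fun j : Fin J => (fun v => if v ∈ ({a} : Finset (Fin n)) then j else 0)) := by
        intro j j' h
        have := congrFun h a
        simpa using this
      rw [hmem, condEnt_comp M (fun s => s a) _ hinj]
      rw [Finset.sum_singleton]
      rw [if_pos]
      by_cases ha : a = 0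
      · exact Or.inl ha
      · exact Or.inr fun hmem' =>
          absurd (Finset.mem_singleton.mp hmem') (ne_of_lt (M.parent_lt a ha))
    · -- inductive case: card ≥ 2
      have hcard2 : 1 < Vs.card := by omega
      set m := Vs.max' hne with hm
      set r := Vs.min' hne with hr
      have hrm : r < m := Finset.min'_lt_max'_of_card Vs hcard2
      have hmVs : m ∈ Vs := Vs.max'_mem hne
      have hmr : m ≠ r := (ne_of_lt hrm).symm
      obtain ⟨hm0, hρVs⟩ := hcl m hmVs hmr
      have hρm_lt : M.parent m < m := M.parent_lt m hm0
      set Vs' := Vs.erase m with hVs'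
      have hrVs' : r ∈ Vs' := Finset.mem_erase.mpr ⟨hmr.symm, Vs.min'_mem hne⟩
      have hne' : Vs'.Nonempty := ⟨r, hrVs'⟩
      have hcard' : Vs'.card = N := by
        rw [hVs', Finset.card_erase_of_mem hmVs, hcard]; rfl
      have hmin' : Vs'.min' hne' = r := by
        refine le_antisymm (Vs'.min'_le r hrVs') ?_
        refine Finset.le_min' _ _ _ fun y hy => ?_
        exact Vs.min'_le y (Finset.mem_of_mem_erase hy)
      have hlt_m : ∀ v ∈ Vs', v < m := by
        intro v hv
        rcases Finset.mem_erase.mp hv with ⟨hvm, hvVs⟩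
        exact lt_of_le_of_ne (Vs.le_max' v hvVs) hvm
      have hcl' : ∀ v ∈ Vs', v ≠ Vs'.min' hne' → v ≠ 0 ∧ M.parent v ∈ Vs' := by
        intro v hv hvr
        rw [hmin'] at hvr
        obtain ⟨hv0, hρv⟩ := hcl v (Finset.mem_of_mem_erase hv) hvr
        refine ⟨hv0, Finset.mem_erase.mpr ⟨?_, hρv⟩⟩
        exact ne_of_lt (lt_trans (M.parent_lt v hv0) (hlt_m v hv))
      have hρVs' : M.parent m ∈ Vs' := Finset.mem_erase.mpr ⟨ne_of_lt hρm_lt, hρVs⟩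
      have hVT : ∀ v ∈ Vs', ¬ M.inSubtree m v := by
        intro v hv hsub
        exact absurd (le_of_inSubtree M hsub) (not_le.mpr (hlt_m v hv))
      -- recode memVar Vs as the pair (s m, memVar Vs' s)
      have hinj : Function.Injective
          (fun c : Fin n → Fin J => (c m, Function.update c m 0)) := by
        intro c c' h
        have h1 : c m = c' m := congrArg Prod.fst h
        have h2 : Function.update c m 0 = Function.update c' m 0 := congrArg Prod.snd h
        funext v
        by_cases hv : v = m
        · rw [hv]; exact h1
        · have := congrFun h2 v
          rwa [Function.update_of_ne hv, Function.update_of_ne hv] at this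
      have hfun : (fun s : Fin n → Fin J => (s m, M.memVar Vs' s))
          = fun s => (fun c : Fin n → Fin J => (c m, Function.update c m 0))
              (M.memVar Vs s) := by
        funext s
        show ((s m, M.memVar Vs' s) : Fin J × (Fin n → Fin J))
          = (M.memVar Vs s m, Function.update (M.memVar Vs s) m 0)
        have e1 : M.memVar Vs s m = s m := by
          unfold HMTModel.memVar; rw [if_pos hmVs]
        have e2 : Function.update (M.memVar Vs s) m 0 = M.memVar Vs' s := by
          funext v
          by_cases hv : v = m
          · rw [hv, Function.update_self]
            show (0 : Fin J) = if m ∈ Vs' then s m else 0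
            rw [if_neg (fun hh => (Finset.mem_erase.mp hh).1 rfl)]
          · rw [Function.update_of_ne hv]
            show (if v ∈ Vs then s v else 0) = if v ∈ Vs' then s v else 0
            by_cases hvv : v ∈ Vs
            · rw [if_pos hvv, if_pos (Finset.mem_erase.mpr ⟨hv, hvv⟩)]
            · rw [if_neg hvv, if_neg (fun hh => hvv (Finset.mem_of_mem_erase hh))]
        rw [e1, e2]
      have hpair : M.condEnt (M.memVar Vs) (obsEq x)
          = M.condEnt (fun s => ((s m), M.memVar Vs' s)) (obsEq x) := by
        rw [hfun, condEnt_comp M _ _ hinj]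
      rw [hpair, condEnt_pair M (fun s => s m) (M.memVar Vs') (obsEq x) hx]
      rw [markov_step M x m hm0 Vs' hVT hρVs' hx]
      rw [ih Vs' hcard' hne' hcl']
      rw [← Finset.sum_erase_add Vs _ hmVs]
      congr 1
      · refine Finset.sum_congr rfl fun v hv => ?_
        refine if_congr ?_ rfl rfl
        by_cases hv0 : v = 0
        · simp [hv0]
        · have hvne : M.parent v ≠ m :=
            ne_of_lt (lt_trans (M.parent_lt v hv0) (hlt_m v hv))
        
          constructor
          · rintro (h | h)
            · exact Or.inl h
            · exact Or.inr fun hh => h (Finset.mem_erase.mpr ⟨hvne, hh⟩)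
          · rintro (h | h)
            · exact Or.inl h
            · exact Or.inr fun hh => h (Finset.mem_of_mem_erase hh)
      · rw [if_neg]
        push_neg
        exact ⟨hm0, hρVs⟩
end Main


/-- In a hidden Markov tree model, for every nonempty subset `Vs`
of the vertex set that induces a subtree (i.e. `Vs` is connected in the tree), the
entropy of the corresponding state subprocess decomposes as
`H(S̄_Vs | X = x) = ∑_{v∈Vs} H(S_v | S_{ρ(v)}, X = x)`, where the term for a vertex
`v` that is the root of the tree or whose parent `ρ(v)` does not belong to `Vs` is
read as `H(S_v | X = x)`. -/
theorem hmt_induced_subtree_entropy_decomposition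
    {J V n : ℕ} [NeZero J] [NeZero n] (M : HMTModel J V n)
    (x : Fin n → Fin V) (hx : 0 < M.pr (obsEq x))
    (Vs : Finset (Fin n)) (hne : Vs.Nonempty)
    (hconn : ∀ a ∈ Vs, ∀ b ∈ Vs, Relation.ReflTransGen
        (fun u v : Fin n => u ∈ Vs ∧ v ∈ Vs ∧
          ((u ≠ 0 ∧ M.parent u = v) ∨ (v ≠ 0 ∧ M.parent v = u))) a b) :
    M.condEnt (M.memVar Vs) (obsEq x)
      = ∑ v ∈ Vs,
          if v = 0 ∨ M.parent v ∉ Vs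
          then M.condEnt (fun s => s v) (obsEq x)
          else M.condEntGiven (fun s => s v) (fun s => s (M.parent v)) (obsEq x) := by
  exact main_decomp M x hx Vs.card Vs rfl hne (conn_parent_closed M Vs hne hconn)
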